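/- For any word v ∈ {a,b}* and letters x ≠ y: |ψ(v)| = |μ_v(x)| + |μ_v(y)| − 2, and gcd(|μ_v(x)|, |μ_v(y)|) = 1, and the minimal period of ψ(v) equals min{|μ_v(x)|, |μ_v(y)|}. -/

import Mathlib

def palClosure (w : List Bool) : List Bool :=
  let k := Nat.find (p := fun k => (w.drop k).reverse = w.drop k)
    ⟨w.length, by simp⟩
  w.take k ++ w.drop k ++ (w.take k).reverse

def psi (v : List Bool) : List Bool := v.foldl (fun w x => palClosure (w ++ [x])) []

def E (v : List Bool) : List Bool := v.map (!·)

def mu (x : Bool) (w : List Bool) : List Bool := w.flatMap (fun y => if y = x then [x] else [x, y])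

def muW : List Bool → List Bool → List Bool
  | [], w => w
  | x :: v, w => mu x (muW v w)

def vN (n : ℕ) : List Bool := (List.range n).map (fun i => decide (i % 2 = 1))

def fibF : ℕ → ℕ
  | 0 => 1
  | 1 => 1
  | n + 2 => fibF (n + 1) + fibF n

def HasPeriod (w : List Bool) (p : ℕ) : Prop :=
  0 < p ∧ ∀ i j (hi : i < w.length) (hj : j < w.length),
    i % p = j % p → w.get ⟨i, hi⟩ = w.get ⟨j, hj⟩

noncomputable def minPeriod (w : List Bool) : ℕ := sInf {p | HasPeriod w p}

def dOp : List Bool → List Bool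
  | x :: y :: u => y :: x :: u
  | w => w

def cOp (v : List Bool) : List Bool := (dOp v.reverse).reverse

def contAux : List ℕ → ℕ
  | [] => 1
  | [a] => a
  | a :: b :: t => a * contAux (b :: t) + contAux t

-- basics
-- basics
lemma mu_nil (a : Bool) : mu a [] = [] := rfl

lemma mu_cons (a c : Bool) (s : List Bool) :
    mu a (c :: s) = (if c = a then [a] else [a, c]) ++ mu a s := by
  simp [mu]

lemma mu_append (a : Bool) (s t : List Bool) : mu a (s ++ t) = mu a s ++ mu a t := by
  simp [mu]

lemma mu_cons' (a c : Bool) (s : List Bool) :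
    mu a (c :: s) = a :: ((if c = a then [] else [c]) ++ mu a s) := by
  rw [mu_cons]; by_cases h : c = a <;> simp [h]

lemma rev_phi (a : Bool) (s : List Bool) :
    (mu a s ++ [a]).reverse = mu a s.reverse ++ [a] := by
  induction s with
  | nil => simp [mu_nil]
  | cons c t ih =>
      rw [mu_cons, List.append_assoc, List.reverse_append, ih]
      rw [show (c :: t).reverse = t.reverse ++ [c] from by simp, mu_append, mu_cons]
      by_cases h : c = a <;> simp [h, mu_nil]

lemma mu_inj (a : Bool) : ∀ s t : List Bool, mu a s = mu a t → s = t := by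
  intro s
  induction s with
  | nil =>
      intro t h
      cases t with
      | nil => rfl
      | cons d t' =>
          rw [mu_nil, mu_cons'] at h
          exact absurd h.symm (by simp)
  | cons c s' ih =>
      intro t h
      cases t with
      | nil => rw [mu_nil, mu_cons'] at h; exact absurd h (by simp)
      | cons d t' =>
          rw [mu_cons', mu_cons'] at h
          have h2 := (List.cons.injEq _ _ _ _).mp h |>.2
          by_cases hc : c = a <;> by_cases hd : d = a
          · subst hc hd; simp at h2; rw [ih _ h2]
          · -- c = a, d ≠ a : h2 : mu a s' = d :: mu a t'  → contradiction
            exfalso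
            simp [hc, hd] at h2
            cases s' with
            | nil => rw [mu_nil] at h2; simp at h2
            | cons e s'' =>
                rw [mu_cons'] at h2
                have : a = d := by
                  have := congrArg (·.head?) h2; simpa using this
                exact hd this.symm
          · exfalso
            simp [hc, hd] at h2
            cases t' with
            | nil => rw [mu_nil] at h2; simp at h2
            | cons e t'' =>
                rw [mu_cons'] at h2
                have : c = a := by
                  have := congrArg (·.head?) h2; simpa using this
                exact hc this
          · simp [hc, hd] at h2
            rw [ih _ h2.2, h2.1]

lemma pal_phi (a : Bool) (s : List Bool) :
    (mu a s ++ [a]).reverse = mu a s ++ [a] ↔ s.reverse = s := by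
  constructor
  · intro h
    rw [rev_phi] at h
    have := List.append_cancel_right h
    exact mu_inj a _ _ this
  · intro h; rw [rev_phi, h]

lemma sandwich (z : Bool) (Y : List Bool) :
    (z :: (Y ++ [z])).reverse = z :: (Y ++ [z]) ↔ Y.reverse = Y := by
  constructor
  · intro h; simpa using h
  · intro h; simp [h]

lemma pal_head_last (x y : Bool) (s : List Bool)
    (h : (x :: (s ++ [y])).reverse = x :: (s ++ [y])) : x = y := by
  simp at h
  exact h.1.symm

-- palClosure master
lemma palClosure_eq (w : List Bool) (j : ℕ)
    (h1 : (w.drop j).reverse = w.drop j)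
    (h2 : ∀ j' < j, ¬((w.drop j').reverse = w.drop j')) :
    palClosure w = w ++ (w.take j).reverse := by
  unfold palClosure
  have hfind : Nat.find (p := fun k => (w.drop k).reverse = w.drop k)
      ⟨w.length, by simp⟩ = j := by
    rw [Nat.find_eq_iff]
    exact ⟨h1, h2⟩
  simp only [hfind, List.take_append_drop]

noncomputable def pk (w : List Bool) : ℕ :=
  Nat.find (p := fun k => (w.drop k).reverse = w.drop k) ⟨w.length, by simp⟩

lemma pk_spec (w : List Bool) : (w.drop (pk w)).reverse = w.drop (pk w) :=
  Nat.find_spec (p := fun k => (w.drop k).reverse = w.drop k) ⟨w.length, by simp⟩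

lemma pk_min (w : List Bool) {j : ℕ} (h : j < pk w) :
    ¬((w.drop j).reverse = w.drop j) :=
  Nat.find_min (p := fun k => (w.drop k).reverse = w.drop k) ⟨w.length, by simp⟩ h

lemma pk_le (w : List Bool) : pk w ≤ w.length :=
  Nat.find_le (by simp)

lemma palClosure_pk (w : List Bool) : palClosure w = w ++ (w.take (pk w)).reverse :=
  palClosure_eq w (pk w) (pk_spec w) (fun _ h => pk_min w h)

lemma pk_le_of (w : List Bool) {j : ℕ} (h : (w.drop j).reverse = w.drop j) : pk w ≤ j :=
  Nat.find_le h

lemma CL_A (a : Bool) : ∀ (t : List Bool) (j : ℕ), j ≤ (mu a t).length →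
    (((mu a t ++ [a]).drop j).reverse = (mu a t ++ [a]).drop j) →
    ∃ i, i ≤ t.length ∧ j = (mu a (t.take i)).length ∧ (t.drop i).reverse = t.drop i := by
  intro t
  induction t with
  | nil =>
      intro j hj hpal
      have : j = 0 := by simpa [mu_nil] using hj
      subst this
      exact ⟨0, by simp [mu_nil]⟩
  | cons c t' ih =>
      intro j hj hpal
      rcases Nat.eq_zero_or_pos j with h0 | hpos
      · subst h0
        refine ⟨0, by simp, by simp [mu_nil], ?_⟩
        exact (pal_phi a (c :: t')).mp (by simpa using hpal)
      · by_cases hc : c = a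
        · -- block is [a]
          have hmu : mu a (c :: t') = [a] ++ mu a t' := by rw [mu_cons]; simp [hc]
          have hj' : j - 1 ≤ (mu a t').length := by
            rw [hmu] at hj; simp at hj; omega
          have hdrop : (mu a (c :: t') ++ [a]).drop j = (mu a t' ++ [a]).drop (j - 1) := by
            rw [hmu, List.append_assoc, ← List.drop_length_add_append (l₁ := [a]) (l₂ := mu a t' ++ [a]) (j - 1)]
            congr 1
            simp; omega
          obtain ⟨i, hi, hji, hpi⟩ := ih (j - 1) hj' (by rw [← hdrop]; exact hpal)
          refine ⟨i + 1, by simpa using hi, ?_, by simpa using hpi⟩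
          rw [List.take_succ_cons, mu_cons']
          simp [hc]
          omega
        · -- block is [a, c]
          have hmu : mu a (c :: t') = [a, c] ++ mu a t' := by rw [mu_cons]; simp [hc]
          rcases Nat.lt_or_ge j 2 with h1 | h2
          · -- j = 1 : impossible
            exfalso
            have hj1 : j = 1 := by omega
            subst hj1
            have hdrop : (mu a (c :: t') ++ [a]).drop 1 = c :: (mu a t' ++ [a]) := by
              rw [hmu]; simp
            rw [hdrop] at hpal
            exact hc (pal_head_last c a (mu a t') hpal)
          · have hj' : j - 2 ≤ (mu a t').length := by
              rw [hmu] at hj; simp at hj; omega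
            have hdrop : (mu a (c :: t') ++ [a]).drop j = (mu a t' ++ [a]).drop (j - 2) := by
              rw [hmu, List.append_assoc, ← List.drop_length_add_append (l₁ := [a, c]) (l₂ := mu a t' ++ [a]) (j - 2)]
              congr 1
              simp; omega
            obtain ⟨i, hi, hji, hpi⟩ := ih (j - 2) hj' (by rw [← hdrop]; exact hpal)
            refine ⟨i + 1, by simpa using hi, ?_, by simpa using hpi⟩
            rw [List.take_succ_cons, mu_cons']
            simp [hc]
            omega

lemma CL_B (a : Bool) : ∀ (u : List Bool) (j : ℕ), j < (mu a (u ++ [!a])).length →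
    ((mu a (u ++ [!a])).drop j).reverse = (mu a (u ++ [!a])).drop j →
    ∃ i, i ≤ u.length ∧ j = (mu a (u.take i)).length + 1 ∧
      ((u.drop i ++ [!a]).reverse = u.drop i ++ [!a]) := by
  intro u
  have hba : (!a) ≠ a := Bool.not_ne_self a
  induction u with
  | nil =>
      intro j hj hpal
      have hmu : mu a ([] ++ [!a]) = [a] ++ ([] ++ [!a]) := by
        simp [mu_cons, mu_nil, hba]
      rw [hmu] at hj hpal
      have : j = 0 ∨ j = 1 := by simp at hj; omega
      rcases this with h0 | h1
      · exfalso
        subst h0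
        simp only [List.drop_zero] at hpal
        exact (Bool.self_ne_not a) (pal_head_last a (!a) [] (by simpa using hpal))
      · subst h1
        exact ⟨0, by simp, by simp [mu_nil], by simp⟩
  | cons c u' ih =>
      intro j hj hpal
      have hsplit : (c :: u') ++ [!a] = c :: (u' ++ [!a]) := rfl
      rcases Nat.eq_zero_or_pos j with h0 | hpos
      · exfalso
        subst h0
        have hmu : mu a ((c :: u') ++ [!a]) =
            a :: ((((if c = a then [] else [c]) ++ mu a u') ++ [a]) ++ [!a]) := by
          rw [hsplit, mu_cons', mu_append]
          simp [mu_cons, mu_nil, hba]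
        rw [hmu] at hpal
        simp only [List.drop_zero] at hpal
        exact (Bool.self_ne_not a) (pal_head_last a (!a) _ hpal)
      · by_cases hc : c = a
        · have hmu : mu a ((c :: u') ++ [!a]) = [a] ++ mu a (u' ++ [!a]) := by
            rw [hsplit, mu_cons]; simp [hc]
          have hj' : j - 1 < (mu a (u' ++ [!a])).length := by
            rw [hmu] at hj; simp at hj; omega
          have hdrop : (mu a ((c :: u') ++ [!a])).drop j = (mu a (u' ++ [!a])).drop (j - 1) := by
            rw [hmu, ← List.drop_length_add_append (l₁ := [a]) (l₂ := mu a (u' ++ [!a])) (j - 1)]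
            congr 1
            simp; omega
          obtain ⟨i, hi, hji, hpi⟩ := ih (j - 1) hj' (by rw [← hdrop]; exact hpal)
          refine ⟨i + 1, by simpa using hi, ?_, by simpa using hpi⟩
          rw [List.take_succ_cons, mu_cons']
          simp [hc]
          omega
        · have hcb : c = !a := by cases a <;> cases c <;> simp_all
          have hmu : mu a ((c :: u') ++ [!a]) = [a, c] ++ mu a (u' ++ [!a]) := by
            rw [hsplit, mu_cons]; simp [hc]
          rcases Nat.lt_or_ge j 2 with h1 | h2
          · have hj1 : j = 1 := by omega
            subst hj1
            have hdrop : (mu a ((c :: u') ++ [!a])).drop 1 =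
                (!a) :: ((mu a u' ++ [a]) ++ [!a]) := by
              rw [hmu, mu_append]
              simp [mu_cons, mu_nil, hba, hcb]
            rw [hdrop] at hpal
            have hpu' : u'.reverse = u' :=
              (pal_phi a u').mp ((sandwich (!a) (mu a u' ++ [a])).mp hpal)
            refine ⟨0, by simp, by simp [mu_nil], ?_⟩
            have : c :: u' ++ [!a] = (!a) :: (u' ++ [!a]) := by rw [hcb]; rfl
            rw [List.drop_zero, this]
            exact (sandwich (!a) u').mpr hpu'
          · have hj' : j - 2 < (mu a (u' ++ [!a])).length := by
              rw [hmu] at hj; simp at hj; omega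
            have hdrop : (mu a ((c :: u') ++ [!a])).drop j = (mu a (u' ++ [!a])).drop (j - 2) := by
              rw [hmu, ← List.drop_length_add_append (l₁ := [a, c]) (l₂ := mu a (u' ++ [!a])) (j - 2)]
              congr 1
              simp; omega
            obtain ⟨i, hi, hji, hpi⟩ := ih (j - 2) hj' (by rw [← hdrop]; exact hpal)
            refine ⟨i + 1, by simpa using hi, ?_, by simpa using hpi⟩
            rw [List.take_succ_cons, mu_cons']
            simp [hc]
            omega

lemma drop_append_le {α : Type*} (l₁ l₂ : List α) {n : ℕ} (h : n ≤ l₁.length) :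
    (l₁ ++ l₂).drop n = l₁.drop n ++ l₂ := by
  rw [List.drop_append, Nat.sub_eq_zero_of_le h, List.drop_zero]

lemma take_append_le {α : Type*} (l₁ l₂ : List α) {n : ℕ} (h : n ≤ l₁.length) :
    (l₁ ++ l₂).take n = l₁.take n := by
  rw [List.take_append, Nat.sub_eq_zero_of_le h, List.take_zero, List.append_nil]

lemma mu_take_mono (a : Bool) (t : List Bool) {k i : ℕ} (h : k ≤ i) :
    (mu a (t.take k)).length ≤ (mu a (t.take i)).length := by
  have hdec : t.take i = t.take k ++ ((t.take i).drop k) := by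
    conv_lhs => rw [← List.take_append_drop k (t.take i)]
    rw [List.take_take, min_eq_left h]
  rw [hdec, mu_append, List.length_append]
  omega

lemma lemC (a : Bool) (t : List Bool) :
    palClosure (mu a t ++ [a]) = mu a (palClosure t) ++ [a] := by
  set k := pk t with hk
  set w := mu a t ++ [a] with hwdef
  have hW : w = mu a (t.take k) ++ (mu a (t.drop k) ++ [a]) := by
    rw [hwdef]
    conv_lhs => rw [← List.take_append_drop k t]
    rw [mu_append, List.append_assoc]
  have hmuT : mu a t = mu a (t.take k) ++ mu a (t.drop k) := by
    conv_lhs => rw [← List.take_append_drop k t]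
    rw [mu_append]
  set j := (mu a (t.take k)).length with hj
  have hjle : j ≤ (mu a t).length := by rw [hmuT]; simp [hj]
  have h1 : w.drop j = mu a (t.drop k) ++ [a] := by
    rw [hW]; exact List.drop_left
  have hpal1 : (w.drop j).reverse = w.drop j := by
    rw [h1]; exact (pal_phi a (t.drop k)).mpr (pk_spec t)
  have h2 : ∀ j' < j, ¬((w.drop j').reverse = w.drop j') := by
    intro j' hlt hp
    obtain ⟨i, hi, hjeq, hpi⟩ := CL_A a t j' (by omega) hp
    have hki : k ≤ i := pk_le_of t hpi
    have := mu_take_mono a t hki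
    omega
  have hL : palClosure w = w ++ (w.take j).reverse := palClosure_eq w j hpal1 h2
  have htake : w.take j = mu a (t.take k) := by rw [hW]; exact List.take_left
  rw [hL, htake, palClosure_pk t, mu_append]
  rw [hwdef, ← hk, List.append_assoc,
    show [a] ++ (mu a (t.take k)).reverse = (mu a (t.take k) ++ [a]).reverse by simp,
    rev_phi a (t.take k), List.append_assoc]

lemma lemC' (a : Bool) (u : List Bool) :
    palClosure (mu a (u ++ [!a])) = mu a (palClosure (u ++ [!a])) ++ [a] := by
  have hba : (!a) ≠ a := Bool.not_ne_self a
  have hmub : mu a [!a] = [a, !a] := by simp [mu, hba]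
  set t := u ++ [!a] with ht
  set k := pk t with hk
  have hklu : k ≤ u.length := by
    apply pk_le_of
    have : t.drop u.length = [!a] := by rw [ht]; exact List.drop_left
    rw [this]; simp
  have hDpal := pk_spec t
  have hD : t.drop k = u.drop k ++ [!a] := by rw [ht]; exact drop_append_le _ _ hklu
  have htk : t.take k = u.take k := by rw [ht]; exact take_append_le _ _ hklu
  set w := mu a t with hwdef
  rcases heq : u.drop k with _ | ⟨e, r⟩
  · -- u.drop k = [], so k = u.length
    have hku : k = u.length := by
      have := congrArg List.length heq
      simp at this; omega
    have htku : t.take k = u := by rw [ht, hku]; exact List.take_left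
    have hW : w = (mu a u ++ [a]) ++ [!a] := by
      rw [hwdef, ht, mu_append, hmub]; simp
    set j := (mu a u ++ [a]).length with hj
    have hdropj : w.drop j = [!a] := by rw [hW]; exact List.drop_left
    have hpal1 : (w.drop j).reverse = w.drop j := by rw [hdropj]; simp
    have hlenw : w.length = (mu a u).length + 2 := by rw [hW]; simp
    have h2 : ∀ j' < j, ¬((w.drop j').reverse = w.drop j') := by
      intro j' hlt hp
      have hj'len : j' < (mu a (u ++ [!a])).length := by
        rw [← ht, ← hwdef, hlenw]; rw [hj] at hlt; simp at hlt; omega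
      obtain ⟨i, hi, hjeq, hpi⟩ := CL_B a u j' hj'len (by rw [← ht, ← hwdef] at *; exact hp)
      have hki : k ≤ i := by
        apply pk_le_of
        rw [ht, drop_append_le _ _ hi]
        exact hpi
      have : i = u.length := by omega
      subst this
      rw [List.take_length] at hjeq
      rw [hj] at hlt; simp at hlt; omega
    have hL : palClosure w = w ++ (w.take j).reverse := palClosure_eq w j hpal1 h2
    have htakej : w.take j = mu a u ++ [a] := by rw [hW]; exact List.take_left
    rw [hL, htakej, rev_phi, palClosure_pk t, ← hk, htku, mu_append, hW]
    simp
    rw [ht, mu_append, hmub]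
    simp
  · -- u.drop k = e :: r
    have hDer : t.drop k = e :: (r ++ [!a]) := by rw [hD, heq]; rfl
    have heb : e = !a := by
      rw [hDer] at hDpal
      exact (pal_head_last e (!a) r hDpal).symm ▸ (pal_head_last e (!a) r hDpal)
    subst heb
    have hpr : r.reverse = r := by
      rw [hDer] at hDpal
      exact (sandwich (!a) r).mp hDpal
    have hT : t = u.take k ++ ((!a) :: (r ++ [!a])) := by
      rw [ht]
      conv_lhs => rw [← List.take_append_drop k u, heq]
      simp
    have hW : w = (mu a (u.take k) ++ [a]) ++ ((!a) :: ((mu a r ++ [a]) ++ [!a])) := by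
      rw [hwdef, hT, mu_append, mu_cons, mu_append, hmub]
      simp [hba]
    set j := (mu a (u.take k) ++ [a]).length with hj
    have hdropj : w.drop j = (!a) :: ((mu a r ++ [a]) ++ [!a]) := by
      rw [hW]; exact List.drop_left
    have hpal1 : (w.drop j).reverse = w.drop j := by
      rw [hdropj]
      exact (sandwich (!a) (mu a r ++ [a])).mpr ((pal_phi a r).mpr hpr)
    have hlenw : w.length ≥ j + 1 := by rw [hW, hj]; simp
    have h2 : ∀ j' < j, ¬((w.drop j').reverse = w.drop j') := by
      intro j' hlt hp
      have hj'len : j' < (mu a (u ++ [!a])).length := by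
        rw [← ht, ← hwdef]; omega
      obtain ⟨i, hi, hjeq, hpi⟩ := CL_B a u j' hj'len (by rw [← ht, ← hwdef] at *; exact hp)
      have hki : k ≤ i := by
        apply pk_le_of
        rw [ht, drop_append_le _ _ hi]
        exact hpi
      have := mu_take_mono a u hki
      rw [hj] at hlt; simp at hlt; omega
    have hL : palClosure w = w ++ (w.take j).reverse := palClosure_eq w j hpal1 h2
    have htakej : w.take j = mu a (u.take k) ++ [a] := by rw [hW]; exact List.take_left
    rw [hL, htakej, rev_phi, palClosure_pk t, ← hk, htk, mu_append, hW]
    simp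
    rw [hT, mu_append, mu_cons, mu_append, hmub]
    simp [hba]

lemma GEN (a c : Bool) (t : List Bool) :
    palClosure (mu a t ++ [a, c]) = mu a (palClosure (t ++ [c])) ++ [a] := by
  by_cases hc : c = a
  · rw [hc]
    have h1 : mu a t ++ [a, a] = mu a (t ++ [a]) ++ [a] := by
      rw [mu_append]; simp [mu]
    rw [h1]
    exact lemC a (t ++ [a])
  · have hc2 : c = !a := by cases a <;> cases c <;> simp_all
    subst hc2
    have h1 : mu a t ++ [a, !a] = mu a (t ++ [!a]) := by
      rw [mu_append]; simp [mu, List.flatMap, Bool.not_ne_self]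
    rw [h1]
    exact lemC' a t

lemma palClosure_singleton (z : Bool) : palClosure [z] = [z] := by
  have := palClosure_eq [z] 0 (by simp) (by omega)
  simpa using this

lemma psi_nil : psi [] = [] := rfl

lemma psi_snoc (v : List Bool) (c : Bool) :
    psi (v ++ [c]) = palClosure (psi v ++ [c]) := by
  simp [psi, List.foldl_append]

lemma psi_cons (a : Bool) (v : List Bool) :
    psi (a :: v) = mu a (psi v) ++ [a] := by
  induction v using List.reverseRecOn with
  | nil =>
      show psi ([] ++ [a]) = mu a (psi []) ++ [a]
      rw [psi_snoc, psi_nil, mu_nil]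
      simpa using palClosure_singleton a
  | append_singleton v' c ih =>
      have h1 : a :: (v' ++ [c]) = (a :: v') ++ [c] := rfl
      rw [h1, psi_snoc, ih, psi_snoc]
      have h2 : (mu a (psi v') ++ [a]) ++ [c] = mu a (psi v') ++ [a, c] := by simp
      rw [h2, GEN]

lemma mu_two (a c d : Bool) (h : c ≠ d) : mu a [c, d] = a :: [c, d] := by
  revert h; cases a <;> cases c <;> cases d <;> decide

lemma INV (x y : Bool) (hxy : x ≠ y) (v : List Bool) :
    ∃ c d : Bool, c ≠ d ∧ muW v [x] ++ muW v [y] = psi v ++ [c, d] ∧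
      muW v [y] ++ muW v [x] = psi v ++ [d, c] := by
  induction v with
  | nil => exact ⟨x, y, hxy, by simp [muW, psi_nil], by simp [muW, psi_nil]⟩
  | cons a v' ih =>
      obtain ⟨c, d, hcd, h1, h2⟩ := ih
      refine ⟨c, d, hcd, ?_, ?_⟩
      · show mu a (muW v' [x]) ++ mu a (muW v' [y]) = psi (a :: v') ++ [c, d]
        rw [← mu_append, h1, mu_append, mu_two a c d hcd, psi_cons]
        simp
      · show mu a (muW v' [y]) ++ mu a (muW v' [x]) = psi (a :: v') ++ [d, c]
        rw [← mu_append, h2, mu_append, mu_two a d c (Ne.symm hcd), psi_cons]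
        simp

lemma len_count (x y : Bool) (hxy : x ≠ y) (w : List Bool) :
    w.length = w.count x + w.count y := by
  induction w with
  | nil => simp
  | cons e w ih =>
      have : e = x ∨ e = y := by cases e <;> cases x <;> cases y <;> simp_all
      rcases this with h | h <;> subst h <;>
        simp [List.count_cons, ih, hxy, Ne.symm hxy] <;> omega

lemma count_mu_self (a : Bool) (w : List Bool) : (mu a w).count a = w.length := by
  induction w with
  | nil => simp [mu_nil]
  | cons e w ih =>
      rw [mu_cons, List.count_append, ih]
      by_cases h : e = a <;> simp [h, List.count_cons, Ne.symm] <;> omega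

lemma count_mu_other (a z : Bool) (hz : z ≠ a) (w : List Bool) :
    (mu a w).count z = w.count z := by
  induction w with
  | nil => simp [mu_nil]
  | cons e w ih =>
      rw [mu_cons, List.count_append, ih, List.count_cons]
      by_cases h : e = a
      · subst h; simp [List.count_cons, Ne.symm hz, hz]
      · by_cases h2 : e = z <;> simp [h, h2, List.count_cons, Ne.symm hz, hz] <;> omega

lemma detInv (x y : Bool) (hxy : x ≠ y) (v : List Bool) :
    (muW v [x]).count x * (muW v [y]).count y
      = (muW v [x]).count y * (muW v [y]).count x + 1 := by
  induction v with
  | nil => simp [muW, List.count_cons, hxy, Ne.symm hxy]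
  | cons a v' ih =>
      set A := (muW v' [x]).count x
      set B := (muW v' [x]).count y
      set C := (muW v' [y]).count x
      set D := (muW v' [y]).count y
      have hax : a = x ∨ a = y := by cases a <;> cases x <;> cases y <;> simp_all
      show (mu a (muW v' [x])).count x * (mu a (muW v' [y])).count y
        = (mu a (muW v' [x])).count y * (mu a (muW v' [y])).count x + 1
      rcases hax with h | h
      · rw [h, count_mu_self, count_mu_self, count_mu_other _ _ (Ne.symm hxy),
          count_mu_other _ _ (Ne.symm hxy),
          len_count x y hxy (muW v' [x]), len_count x y hxy (muW v' [y])]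
        calc (A + B) * D = A * D + B * D := by ring
          _ = (B * C + 1) + B * D := by rw [ih]
          _ = B * (C + D) + 1 := by ring
      · rw [h, count_mu_self, count_mu_self, count_mu_other _ _ hxy,
          count_mu_other _ _ hxy,
          len_count x y hxy (muW v' [x]), len_count x y hxy (muW v' [y])]
        calc A * (C + D) = A * C + A * D := by ring
          _ = A * C + (B * C + 1) := by rw [ih]
          _ = (A + B) * C + 1 := by ring

def StepP (w : List Bool) (p : ℕ) : Prop :=
  ∀ i, i + p < w.length → w[i]? = w[i + p]?

lemma hasPeriod_of_step {w : List Bool} {p : ℕ} (hp : 0 < p) (h : StepP w p) :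
    HasPeriod w p := by
  refine ⟨hp, ?_⟩
  have key : ∀ k i, i + p * k < w.length → w[i]? = w[i + p * k]? := by
    intro k
    induction k with
    | zero => intro i hik; simp
    | succ k ihk =>
        intro i hik
        have hik' : i + p * k < w.length := by
          rw [Nat.mul_succ] at hik; omega
        have e1 := ihk i hik'
        have e2 := h (i + p * k) (by rw [Nat.mul_succ] at hik; omega)
        rw [show i + p * (k + 1) = i + p * k + p by ring]
        exact e1.trans e2
  have main : ∀ i j (hi : i < w.length) (hj : j < w.length), i ≤ j → i % p = j % p →
      w.get ⟨i, hi⟩ = w.get ⟨j, hj⟩ := by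
    intro i j hi hj hij hmod
    have hdvd : p ∣ j - i := (Nat.modEq_iff_dvd' hij).mp hmod
    obtain ⟨k, hk⟩ := hdvd
    have := key k i (by omega)
    rw [show i + p * k = j by omega] at this
    rw [List.getElem?_eq_getElem hi, List.getElem?_eq_getElem hj] at this
    simpa using Option.some.inj this
  intro i j hi hj hmod
  rcases le_total i j with hij | hij
  · exact main i j hi hj hij hmod
  · exact (main j i hj hi hij hmod.symm).symm

lemma stepP_of_hasPeriod {w : List Bool} {p : ℕ} (h : HasPeriod w p) : StepP w p := by
  intro i hi
  have := h.2 i (i + p) (by omega) hi (by simp [Nat.add_mod_right])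
  rw [List.getElem?_eq_getElem (show i < w.length by omega), List.getElem?_eq_getElem hi]
  simpa using this

lemma gcd_sub_eq {p q : ℕ} (h : p ≤ q) : Nat.gcd p (q - p) = Nat.gcd p q := by
  apply Nat.dvd_antisymm
  · apply Nat.dvd_gcd (Nat.gcd_dvd_left _ _)
    have h1 := Nat.gcd_dvd_left p (q - p)
    have h2 := Nat.gcd_dvd_right p (q - p)
    have h3 : Nat.gcd p (q - p) ∣ (q - p) + p := Nat.dvd_add h2 h1
    rwa [show q - p + p = q by omega] at h3
  · apply Nat.dvd_gcd (Nat.gcd_dvd_left _ _)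
    exact Nat.dvd_sub (Nat.gcd_dvd_right p q) (Nat.gcd_dvd_left p q)

lemma fw (w : List Bool) : ∀ n p q, p + q ≤ n → 0 < p → 0 < q → p + q ≤ w.length →
    StepP w p → StepP w q → StepP w (Nat.gcd p q) := by
  intro n
  induction n with
  | zero => intro p q h hp; omega
  | succ n ih =>
      intro p q hn hp hq hlen hP hQ
      rcases lt_trichotomy p q with h | h | h
      · have hQP : StepP w (q - p) := by
          intro i hi
          rcases Nat.lt_or_ge (i + q) w.length with hcase | hcase
          · have e1 := hQ i hcase
            have e2 := hP (i + (q - p)) (by omega)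
            rw [show i + (q - p) + p = i + q by omega] at e2
            exact e1.trans e2.symm
          · have e1 := hP (i - p) (by omega)
            rw [show i - p + p = i by omega] at e1
            have e2 := hQ (i - p) (by omega)
            rw [show i - p + q = i + (q - p) by omega] at e2
            exact e1.symm.trans e2
        have := ih p (q - p) (by omega) hp (by omega) (by omega) hP hQP
        rwa [gcd_sub_eq (by omega)] at this
      · subst h
        rwa [Nat.gcd_self]
      · have hPQ : StepP w (p - q) := by
          intro i hi
          rcases Nat.lt_or_ge (i + p) w.length with hcase | hcase
          · have e1 := hP i hcase
            have e2 := hQ (i + (p - q)) (by omega)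
            rw [show i + (p - q) + q = i + p by omega] at e2
            exact e1.trans e2.symm
          · have e1 := hQ (i - q) (by omega)
            rw [show i - q + q = i by omega] at e1
            have e2 := hP (i - q) (by omega)
            rw [show i - q + p = i + (p - q) by omega] at e2
            exact e1.symm.trans e2
        have := ih q (p - q) (by omega) hq (by omega) (by omega) hQ hPQ
        rw [gcd_sub_eq (by omega)] at this
        rwa [Nat.gcd_comm] at this

lemma stepP_INV {w W1 W2 : List Bool} {c d : Bool}
    (h1 : W1 ++ W2 = w ++ [c, d]) (h2 : W2 ++ W1 = w ++ [d, c]) :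
    StepP w W1.length := by
  have hlen : W1.length + W2.length = w.length + 2 := by
    have := congrArg List.length h1
    simpa using this
  intro i hi
  have hiW2 : i < W2.length := by omega
  have e1 : w[i]? = W2[i]? := by
    rw [← List.getElem?_append_left (l₂ := [d, c]) (show i < w.length by omega), ← h2,
      List.getElem?_append_left hiW2]
  have e2 : w[i + W1.length]? = W2[i]? := by
    rw [← List.getElem?_append_left (l₂ := [c, d]) (show i + W1.length < w.length by omega), ← h1,
      List.getElem?_append_right (show W1.length ≤ i + W1.length by omega),
      show i + W1.length - W1.length = i by omega]
  exact e1.trans e2.symm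

lemma const_contra (x y : Bool) (hxy : x ≠ y) (v : List Bool)
    (hp2 : 2 ≤ (muW v [x]).length) (hq2 : 2 ≤ (muW v [y]).length)
    (hper : HasPeriod (psi v) 1) : False := by
  obtain ⟨c, d, hcd, h1, h2⟩ := INV x y hxy v
  have hlen : (muW v [x]).length + (muW v [y]).length = (psi v).length + 2 := by
    have := congrArg List.length h1; simpa using this
  have hn : 0 < (psi v).length := by omega
  set z := (psi v).get ⟨0, hn⟩ with hz
  clear_value z
  have hallz : ∀ b ∈ psi v, b = z := by
    intro b hb
    obtain ⟨i, hi⟩ := List.mem_iff_get.mp hb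
    rw [← hi, hz]
    exact hper.2 i.1 0 i.2 hn (by simp [Nat.mod_one])
  have hw : psi v = List.replicate (psi v).length z :=
    List.eq_replicate_iff.2 ⟨rfl, hallz⟩
  have hW1 : muW v [x] = List.replicate (muW v [x]).length z := by
    have e1 : muW v [x] = (psi v ++ [c, d]).take (muW v [x]).length := by
      rw [← h1]; exact (List.take_left).symm
    conv_lhs => rw [e1, take_append_le _ _ (by omega), hw]
    rw [List.take_replicate, min_eq_left (by omega)]
  have hW2 : muW v [y] = List.replicate (muW v [y]).length z := by
    have e1 : muW v [y] = (psi v ++ [d, c]).take (muW v [y]).length := by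
      rw [← h2]; exact (List.take_left).symm
    conv_lhs => rw [e1, take_append_le _ _ (by omega), hw]
    rw [List.take_replicate, min_eq_left (by omega)]
  have det := detInv x y hxy v
  rw [hW1, hW2] at det
  have hzxy : z = x ∨ z = y := by
    by_cases hzx : z = x
    · exact Or.inl hzx
    · refine Or.inr ?_
      revert hzx hxy
      clear * - 
      cases z <;> cases x <;> cases y <;> simp
  rcases hzxy with h | h <;> rw [h] at det <;>
    simp [List.count_replicate, hxy, Ne.symm hxy] at det

theorem stmt14 (v : List Bool) (x y : Bool) (hxy : x ≠ y) :
    (psi v).length = (muW v [x]).length + (muW v [y]).length - 2 ∧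
    Nat.Coprime (muW v [x]).length (muW v [y]).length ∧
    minPeriod (psi v) = min (muW v [x]).length (muW v [y]).length := by
  obtain ⟨c, d, hcd, h1, h2⟩ := INV x y hxy v
  have hlen : (muW v [x]).length + (muW v [y]).length = (psi v).length + 2 := by
    have := congrArg List.length h1; simpa using this
  set W1 := muW v [x] with hW1
  set W2 := muW v [y] with hW2
  set w := psi v with hw
  set p := W1.length with hp
  set q := W2.length with hq
  set A := W1.count x with hA
  set B := W1.count y with hB
  set C := W2.count x with hC
  set D := W2.count y with hD
  have det : A * D = B * C + 1 := detInv x y hxy v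
  have hpAB : p = A + B := len_count x y hxy W1
  have hqCD : q = C + D := len_count x y hxy W2
  have hApos : 1 ≤ A ∧ 1 ≤ D := by
    constructor <;> by_contra hcon <;> push_neg at hcon <;>
      [ (have : A = 0 := by omega); (have : D = 0 := by omega) ] <;>
      rw [this] at det <;> simp at det
  have hp1 : 1 ≤ p := by omega
  have hq1 : 1 ≤ q := by omega
  -- coprimality
  have key : q * A = C * p + 1 := by
    calc q * A = C * A + A * D := by rw [hqCD]; ring
      _ = C * A + (B * C + 1) := by rw [det]
      _ = C * (A + B) + 1 := by ring
      _ = C * p + 1 := by rw [hpAB]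
  have hcop : Nat.Coprime p q := by
    have hd1 := Nat.gcd_dvd_left p q
    have hd2 := Nat.gcd_dvd_right p q
    have hdq : Nat.gcd p q ∣ q * A := hd2.mul_right A
    rw [key] at hdq
    have hdp : Nat.gcd p q ∣ C * p := hd1.mul_left C
    have := Nat.dvd_sub hdq hdp
    rw [show C * p + 1 - C * p = 1 by omega] at this
    exact Nat.dvd_one.mp this
  refine ⟨by omega, hcop, ?_⟩
  -- minimal period
  have hstep_p : StepP w p := stepP_INV h1 h2
  have hstep_q : StepP w q := stepP_INV h2 h1
  have hper_p : HasPeriod w p := hasPeriod_of_step (by omega) hstep_p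
  have hper_q : HasPeriod w q := hasPeriod_of_step (by omega) hstep_q
  have hmem : HasPeriod w (min p q) := by
    rcases le_total p q with h | h
    · rwa [min_eq_left h]
    · rwa [min_eq_right h]
  have hne : {r | HasPeriod w r}.Nonempty := ⟨min p q, hmem⟩
  have hr_mem : minPeriod w ∈ {r | HasPeriod w r} := Nat.sInf_mem hne
  have hle : minPeriod w ≤ min p q := Nat.sInf_le hmem
  have hge : min p q ≤ minPeriod w := by
    by_contra hcon
    push_neg at hcon
    set r := minPeriod w with hrdef
    have hr : HasPeriod w r := hr_mem
    have hr1 : 0 < r := hr.1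
    have hm2 : 2 ≤ min p q := by omega
    have hnotconst : ¬ HasPeriod w 1 :=
      fun hconst => const_contra x y hxy v (by rw [← hW1]; omega) (by rw [← hW2]; omega) hconst
    have hstep_r : StepP w r := stepP_of_hasPeriod hr
    -- min and max
    have hstep_m : StepP w (min p q) := by
      rcases le_total p q with h | h
      · rwa [min_eq_left h]
      · rwa [min_eq_right h]
    have hstep_M : StepP w (max p q) := by
      rcases le_total p q with h | h
      · rwa [max_eq_right h]
      · rwa [max_eq_left h]
    have hgcd_mM : Nat.gcd (min p q) (max p q) = 1 := by
      rcases le_total p q with h | h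
      · rw [min_eq_left h, max_eq_right h]; exact hcop
      · rw [min_eq_right h, max_eq_left h]; exact Nat.Coprime.symm hcop
    have hsum : min p q + max p q = w.length + 2 := by
      rcases le_total p q with h | h
      · rw [min_eq_left h, max_eq_right h]; omega
      · rw [min_eq_right h, max_eq_left h]; omega
    have hmM : min p q < max p q := by
      rcases eq_or_lt_of_le (min_le_max (a := p) (b := q)) with h | h
      · exfalso; rw [h, Nat.gcd_self] at hgcd_mM; omega
      · exact h
    -- first FW application
    have hg1_step : StepP w (Nat.gcd r (min p q)) :=
      fw w (r + min p q) r (min p q) le_rfl hr1 (by omega) (by omega) hstep_r hstep_m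
    set g1 := Nat.gcd r (min p q) with hg1def
    have hg1_dvd : g1 ∣ min p q := Nat.gcd_dvd_right _ _
    have hg1_le : g1 ≤ r := Nat.le_of_dvd hr1 (Nat.gcd_dvd_left _ _)
    have hg1_pos : 0 < g1 := Nat.gcd_pos_of_pos_left _ hr1
    by_cases hg1_one : g1 = 1
    · exact hnotconst (hasPeriod_of_step one_pos (hg1_one ▸ hg1_step))
    · have hg1_2 : 2 ≤ g1 := by omega
      have h2g1 : 2 * g1 ≤ min p q := by
        obtain ⟨t, ht⟩ := hg1_dvd
        have ht2 : 2 ≤ t := by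
          rcases Nat.lt_or_ge t 2 with h | h
          · interval_cases t <;> omega
          · exact h
        have := Nat.mul_le_mul_left g1 ht2
        omega
      have hg2_step : StepP w (Nat.gcd g1 (max p q)) :=
        fw w (g1 + max p q) g1 (max p q) le_rfl hg1_pos (by omega) (by omega)
          hg1_step hstep_M
      have hg2_one : Nat.gcd g1 (max p q) = 1 := by
        have hdvd : Nat.gcd g1 (max p q) ∣ Nat.gcd (min p q) (max p q) :=
          Nat.dvd_gcd ((Nat.gcd_dvd_left g1 (max p q)).trans hg1_dvd)
            (Nat.gcd_dvd_right g1 (max p q))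
        rw [hgcd_mM] at hdvd
        exact Nat.dvd_one.mp hdvd
      exact hnotconst (hasPeriod_of_step one_pos (hg2_one ▸ hg2_step))
  omega
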